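/- Consider the switched linear system X_{t+1} = A_{α_t} X_t + w_t in ℝ^d, where A_1, …, A_q are d×d real matrices, α : ℕ → {1,…,q} is a deterministic switching sequence, X_0 ∈ ℝ^d is a fixed initial state, and (w_t)_{t≥0} are i.i.d. random vectors whose common law has a density f with f(x) ≥ κ for x ∈ W and f(x) = 0 for x ∉ W, for some κ > 0 and a compact convex set W ⊆ ℝ^d with nonempty interior. Fix p ∈ {1,…,q} such that {t : α_t = p} is infinite, and fix a d×d matrix Â with Â ≠ A_p. Then, almost surely, there are infinitely many times t ≥ 1 with α_t = p and X_{t+1} − Â·X_t ∉ W. -/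

import Mathlib

open MeasureTheory ProbabilityTheory
open scoped ENNReal

namespace WMAux

noncomputable def traj {d q : ℕ} (A : Fin q → Matrix (Fin d) (Fin d) ℝ) (α : ℕ → Fin q)
    (x₀ : Fin d → ℝ) : (t : ℕ) → (Fin t → (Fin d → ℝ)) → (Fin d → ℝ)
  | 0, _ => x₀
  | (t+1), v => (A (α t)).mulVec (traj A α x₀ t (fun i => v i.castSucc)) + v (Fin.last t)

lemma measurable_mulVec {d : ℕ} (M : Matrix (Fin d) (Fin d) ℝ) :
    Measurable (fun x : Fin d → ℝ => M.mulVec x) := by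
  have : Continuous (M.mulVecLin : (Fin d → ℝ) →ₗ[ℝ] (Fin d → ℝ)) :=
    LinearMap.continuous_of_finiteDimensional _
  exact this.measurable

lemma measurable_traj {d q : ℕ} (A : Fin q → Matrix (Fin d) (Fin d) ℝ) (α : ℕ → Fin q)
    (x₀ : Fin d → ℝ) : ∀ t, Measurable (traj A α x₀ t)
  | 0 => measurable_const
  | (t+1) => by
    apply Measurable.add
    · exact (measurable_mulVec _).comp
        ((measurable_traj A α x₀ t).comp
          (measurable_pi_lambda _ fun i => measurable_pi_apply _))
    · exact measurable_pi_apply _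

lemma cap_pos {d : ℕ} {W : Set (Fin d → ℝ)} (hWconv : Convex ℝ W)
    (hWint : (interior W).Nonempty) (g : (Fin d → ℝ) →ₗ[ℝ] ℝ) {y₀ : Fin d → ℝ}
    (hy₀ : y₀ ∈ W) {ε : ℝ} (hε : 0 < ε) :
    0 < volume {y | y ∈ W ∧ g y < g y₀ + ε} := by
  obtain ⟨x₁, hx₁⟩ := hWint
  have hgc : Continuous g := LinearMap.continuous_of_finiteDimensional g
  set K : ℝ := |g x₁ - g y₀| with hK
  have hK0 : (0:ℝ) ≤ K := abs_nonneg _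
  set t : ℝ := min 1 (ε / (K + 1)) with ht
  have ht0 : 0 < t := lt_min one_pos (div_pos hε (by linarith))
  have ht1 : t ≤ 1 := min_le_left _ _
  have hz : t • x₁ + (1 - t) • y₀ ∈ interior W :=
    hWconv.combo_interior_self_mem_interior hx₁ hy₀ ht0 (by linarith) (by ring)
  have hgz : g (t • x₁ + (1 - t) • y₀) < g y₀ + ε := by
    have h1 : g (t • x₁ + (1 - t) • y₀) = g y₀ + t * (g x₁ - g y₀) := by
      simp [map_add, _root_.map_smul, smul_eq_mul]; ring
    have h2 : t * (g x₁ - g y₀) ≤ t * K := by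
      have := le_abs_self (g x₁ - g y₀)
      nlinarith
    have h3 : t * K < ε := by
      have htle : t ≤ ε / (K + 1) := min_le_right _ _
      have : t * K ≤ (ε / (K + 1)) * K := by nlinarith
      have hlt : (ε / (K + 1)) * K < ε := by
        rw [div_mul_eq_mul_div, div_lt_iff₀ (by linarith)]
        nlinarith
      linarith
    linarith
  set U : Set (Fin d → ℝ) := interior W ∩ g ⁻¹' (Set.Iio (g y₀ + ε)) with hU
  have hUopen : IsOpen U := isOpen_interior.inter (isOpen_Iio.preimage hgc)
  have hUne : U.Nonempty := ⟨_, hz, hgz⟩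
  have hUsub : U ⊆ {y | y ∈ W ∧ g y < g y₀ + ε} := fun y hy =>
    ⟨interior_subset hy.1, hy.2⟩
  calc (0:ℝ≥0∞) < volume U := hUopen.measure_pos volume hUne
    _ ≤ _ := measure_mono hUsub

lemma core {d : ℕ} {W : Set (Fin d → ℝ)} (hWc : IsCompact W) (hWconv : Convex ℝ W)
    (hWint : (interior W).Nonempty) {κ : ℝ} (hκ : 0 < κ) {f : (Fin d → ℝ) → ℝ}
    (hfW : ∀ x ∈ W, κ ≤ f x)
    (μ : Measure (Fin d → ℝ)) (hμ : μ = volume.withDensity fun x => ENNReal.ofReal (f x))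
    [IsProbabilityMeasure μ]
    {B : Matrix (Fin d) (Fin d) ℝ} (hB : B ≠ 0) :
    ∃ δ : ℝ≥0∞, 0 < δ ∧ ∀ c : Fin d → ℝ,
      (μ.prod μ) {yz : (Fin d → ℝ) × (Fin d → ℝ) | B.mulVec yz.1 + yz.2 + c ∈ W} ≤ 1 - δ := by
  have mW : MeasurableSet W := hWc.isClosed.measurableSet
  have hWne : W.Nonempty := hWint.mono interior_subset
  -- a nonzero entry
  have hexij : ∃ i j, B i j ≠ 0 := by
    by_contra h
    push_neg at h
    exact hB (by ext i j; simpa using h i j)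
  obtain ⟨i, j, hij⟩ := hexij
  -- two linear functionals
  set χ : (Fin d → ℝ) →ₗ[ℝ] ℝ := (LinearMap.proj i).comp B.mulVecLin with hχ
  set ψ : (Fin d → ℝ) →ₗ[ℝ] ℝ := LinearMap.proj (R := ℝ) (φ := fun _ : Fin d => ℝ) i with hψ
  have hχapp : ∀ y, χ y = B.mulVec y i := fun y => rfl
  have hψapp : ∀ y, ψ y = y i := fun y => rfl
  have hχc : Continuous χ := LinearMap.continuous_of_finiteDimensional _
  have hψc : Continuous ψ := LinearMap.continuous_of_finiteDimensional _
  -- extremizers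
  obtain ⟨ymin, hyminW, hymin⟩ := hWc.exists_isMinOn hWne hχc.continuousOn
  obtain ⟨ymax, hymaxW, hymax⟩ := hWc.exists_isMaxOn hWne hχc.continuousOn
  obtain ⟨zmin, hzminW, hzmin⟩ := hWc.exists_isMinOn hWne hψc.continuousOn
  obtain ⟨zmax, hzmaxW, hzmax⟩ := hWc.exists_isMaxOn hWne hψc.continuousOn
  -- a gap in direction χ
  obtain ⟨x₁, hx₁⟩ := hWint
  set e : Fin d → ℝ := Pi.single j 1 with he
  have hχe : χ e = B i j := by
    simp [hχapp, he, Matrix.mulVec, dotProduct, Pi.single_apply]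
  have hcont2 : Continuous fun t : ℝ => x₁ + t • e := by continuity
  have hev : ∀ᶠ t in nhds (0:ℝ), x₁ + t • e ∈ interior W := by
    have h0 : x₁ + (0:ℝ) • e ∈ interior W := by simpa using hx₁
    exact hcont2.continuousAt.eventually_mem (isOpen_interior.mem_nhds h0)
  obtain ⟨ε₀, hε₀, hball⟩ := Metric.eventually_nhds_iff.mp hev
  set t₀ : ℝ := ε₀ / 2 with ht₀
  have ht₀pos : 0 < t₀ := by positivity
  have hbW : x₁ + t₀ • e ∈ W := by
    refine interior_subset (hball ?_)
    rw [Real.dist_eq, sub_zero, abs_of_pos ht₀pos]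
    rw [ht₀]; linarith
  have haW : x₁ ∈ W := interior_subset hx₁
  have hdiff : χ (x₁ + t₀ • e) - χ x₁ = t₀ * B i j := by
    simp [map_add, _root_.map_smul, smul_eq_mul, hχe]
  set ρ : ℝ := |t₀ * B i j| / 2 with hρ
  have hρpos : 0 < ρ := by
    have : t₀ * B i j ≠ 0 := mul_ne_zero ht₀pos.ne' hij
    have := abs_pos.mpr this
    positivity
  have hgap : 2 * ρ ≤ χ ymax - χ ymin := by
    have h1 : χ ymin ≤ χ x₁ := hymin haW
    have h2 : χ ymin ≤ χ (x₁ + t₀ • e) := hymin hbW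
    have h3 : χ x₁ ≤ χ ymax := hymax haW
    have h4 : χ (x₁ + t₀ • e) ≤ χ ymax := hymax hbW
    have : |t₀ * B i j| ≤ χ ymax - χ ymin := by
      rw [← hdiff]
      rw [abs_le]
      constructor <;> linarith
    linarith
  -- caps
  set C₁ : Set (Fin d → ℝ) := {y | y ∈ W ∧ χ y < χ ymin + ρ/2} with hC₁
  set C₂ : Set (Fin d → ℝ) := {y | y ∈ W ∧ (-χ) y < (-χ) ymax + ρ/2} with hC₂
  set D₁ : Set (Fin d → ℝ) := {y | y ∈ W ∧ ψ y < ψ zmin + ρ/2} with hD₁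
  set D₂ : Set (Fin d → ℝ) := {y | y ∈ W ∧ (-ψ) y < (-ψ) zmax + ρ/2} with hD₂
  have hρ2 : 0 < ρ/2 := by linarith
  have hvC₁ : 0 < volume C₁ := cap_pos hWconv ⟨x₁, hx₁⟩ χ hyminW hρ2
  have hvC₂ : 0 < volume C₂ := cap_pos hWconv ⟨x₁, hx₁⟩ (-χ) hymaxW hρ2
  have hvD₁ : 0 < volume D₁ := cap_pos hWconv ⟨x₁, hx₁⟩ ψ hzminW hρ2
  have hvD₂ : 0 < volume D₂ := cap_pos hWconv ⟨x₁, hx₁⟩ (-ψ) hzmaxW hρ2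
  have mcap : ∀ (g : (Fin d → ℝ) →ₗ[ℝ] ℝ) (r : ℝ),
      MeasurableSet {y | y ∈ W ∧ g y < r} := by
    intro g r
    have hgc : Continuous g := LinearMap.continuous_of_finiteDimensional _
    exact mW.inter (measurableSet_lt hgc.measurable measurable_const)
  have mC₁ : MeasurableSet C₁ := mcap χ _
  have mC₂ : MeasurableSet C₂ := mcap (-χ) _
  have mD₁ : MeasurableSet D₁ := mcap ψ _
  have mD₂ : MeasurableSet D₂ := mcap (-ψ) _
  -- μ of caps positive
  have hmucap : ∀ (C : Set (Fin d → ℝ)), MeasurableSet C → C ⊆ W → 0 < volume C →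
      0 < μ C := by
    intro C mC hsub hvol
    have key : ENNReal.ofReal κ * volume C ≤ μ C := by
      have h1 : ENNReal.ofReal κ * volume C
          = ∫⁻ x, C.indicator (fun _ => ENNReal.ofReal κ) x := by
        rw [lintegral_indicator mC, setLIntegral_const]
      have h2 : (∫⁻ x, C.indicator (fun _ => ENNReal.ofReal κ) x)
          ≤ ∫⁻ x, C.indicator (fun x => ENNReal.ofReal (f x)) x := by
        refine lintegral_mono fun x => ?_
        by_cases hx : x ∈ C
        · simpa [Set.indicator_of_mem hx] using
            ENNReal.ofReal_le_ofReal (hfW x (hsub hx))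
        · simp [Set.indicator_of_notMem hx]
      have h3 : (∫⁻ x, C.indicator (fun x => ENNReal.ofReal (f x)) x) = μ C := by
        rw [lintegral_indicator mC, hμ, withDensity_apply _ mC]
      rw [h1]; rw [← h3]; exact h2
    calc (0:ℝ≥0∞) < ENNReal.ofReal κ * volume C :=
          ENNReal.mul_pos (ENNReal.ofReal_pos.mpr hκ).ne' hvol.ne'
      _ ≤ μ C := key
  have hμC₁ := hmucap C₁ mC₁ (fun y hy => hy.1) hvC₁
  have hμC₂ := hmucap C₂ mC₂ (fun y hy => hy.1) hvC₂
  have hμD₁ := hmucap D₁ mD₁ (fun y hy => hy.1) hvD₁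
  have hμD₂ := hmucap D₂ mD₂ (fun y hy => hy.1) hvD₂
  -- the δ
  refine ⟨min (μ C₁ * μ D₁) (μ C₂ * μ D₂),
    lt_min (ENNReal.mul_pos hμC₁.ne' hμD₁.ne') (ENNReal.mul_pos hμC₂.ne' hμD₂.ne'), ?_⟩
  intro c
  set S : Set ((Fin d → ℝ) × (Fin d → ℝ)) :=
    {yz | B.mulVec yz.1 + yz.2 + c ∈ W} with hS
  have mS : MeasurableSet S := by
    have hm : Measurable fun yz : (Fin d → ℝ) × (Fin d → ℝ) =>
        B.mulVec yz.1 + yz.2 + c := by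
      exact (((measurable_mulVec B).comp measurable_fst).add measurable_snd).add
        measurable_const
    exact hm mW
  -- lower bound on complement
  have hcompl : min (μ C₁ * μ D₁) (μ C₂ * μ D₂) ≤ (μ.prod μ) Sᶜ := by
    by_cases hcase : χ ymin + ψ zmin + ρ + c i ≤ ψ zmin
    · -- case 1: low caps push below the minimum coordinate
      have hsub : C₁ ×ˢ D₁ ⊆ Sᶜ := by
        rintro ⟨y, z⟩ ⟨hy, hz⟩
        intro hmem
        have hu : ψ zmin ≤ B.mulVec y i + z i + c i := by
          have := hzmin (hmem : B.mulVec y + z + c ∈ W)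
          simpa [hψapp] using this
        have hy2 : B.mulVec y i < χ ymin + ρ/2 := by
          have := hy.2; rwa [hχapp] at this
        have hz2 : z i < ψ zmin + ρ/2 := by
          have := hz.2; rwa [hψapp] at this
        linarith
      calc min (μ C₁ * μ D₁) (μ C₂ * μ D₂) ≤ μ C₁ * μ D₁ := min_le_left _ _
        _ = (μ.prod μ) (C₁ ×ˢ D₁) := (Measure.prod_prod _ _).symm
        _ ≤ (μ.prod μ) Sᶜ := measure_mono hsub
    · -- case 2: high caps push above the maximum coordinate
      push_neg at hcase
      have hsub : C₂ ×ˢ D₂ ⊆ Sᶜ := by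
        rintro ⟨y, z⟩ ⟨hy, hz⟩
        intro hmem
        have hu : B.mulVec y i + z i + c i ≤ ψ zmax := by
          have := hzmax (hmem : B.mulVec y + z + c ∈ W)
          simpa [hψapp] using this
        have hy2 : χ ymax - ρ/2 < B.mulVec y i := by
          have := hy.2
          simp only [LinearMap.neg_apply] at this
          rw [hχapp] at this; linarith
        have hz2 : ψ zmax - ρ/2 < z i := by
          have := hz.2
          simp only [LinearMap.neg_apply] at this
          rw [hψapp] at this; linarith
        linarith
      calc min (μ C₁ * μ D₁) (μ C₂ * μ D₂) ≤ μ C₂ * μ D₂ := min_le_right _ _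
        _ = (μ.prod μ) (C₂ ×ˢ D₂) := (Measure.prod_prod _ _).symm
        _ ≤ (μ.prod μ) Sᶜ := measure_mono hsub
  have : (μ.prod μ) S = 1 - (μ.prod μ) Sᶜ := by
    have := prob_compl_eq_one_sub (μ := μ.prod μ) mS.compl
    rwa [compl_compl] at this
  rw [this]
  exact tsub_le_tsub_left hcompl 1


end WMAux

open MeasureTheory ProbabilityTheory

theorem wrong_matrix_infeasible_infinitely_often
    {Ω : Type*} [MeasurableSpace Ω] (P : Measure Ω) [IsProbabilityMeasure P]
    (d q : ℕ) (hd : 1 ≤ d) (hq : 1 ≤ q)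
    (W : Set (Fin d → ℝ))
    (hWc : IsCompact W) (hWconv : Convex ℝ W) (hWint : (interior W).Nonempty)
    (κ : ℝ) (hκ : 0 < κ)
    (w : ℕ → Ω → Fin d → ℝ) (hw : ∀ t, Measurable (w t))
    (hindep : iIndepFun w P)
    (f : (Fin d → ℝ) → ℝ)
    (hlaw : ∀ t, P.map (w t) = volume.withDensity fun x => ENNReal.ofReal (f x))
    (hfW : ∀ x ∈ W, κ ≤ f x) (hf0 : ∀ x ∉ W, f x = 0)
    (A : Fin q → Matrix (Fin d) (Fin d) ℝ) (α : ℕ → Fin q) (x₀ : Fin d → ℝ)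
    (X : ℕ → Ω → Fin d → ℝ)
    (hX0 : ∀ ω, X 0 ω = x₀)
    (hXrec : ∀ t ω, X (t + 1) ω = (A (α t)).mulVec (X t ω) + w t ω)
    (p : Fin q) (hp : {t : ℕ | α t = p}.Infinite)
    (Ahat : Matrix (Fin d) (Fin d) ℝ) (hAhat : Ahat ≠ A p) :
    ∀ᵐ ω ∂P,
      {t : ℕ | 1 ≤ t ∧ α t = p ∧
        X (t + 1) ω - Ahat.mulVec (X t ω) ∉ W}.Infinite := by
  classical
  set μ : Measure (Fin d → ℝ) := volume.withDensity (fun x => ENNReal.ofReal (f x)) with hμdef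
  have hμlaw : ∀ t, P.map (w t) = μ := fun t => hlaw t
  haveI hμprob : IsProbabilityMeasure μ := by
    rw [← hμlaw 0]; exact Measure.isProbabilityMeasure_map (hw 0).aemeasurable
  set B : Matrix (Fin d) (Fin d) ℝ := A p - Ahat with hBdef
  have hB : B ≠ 0 := sub_ne_zero.mpr (Ne.symm hAhat)
  obtain ⟨δ, hδpos, hcore⟩ := WMAux.core hWc hWconv hWint hκ hfW μ rfl hB
  have mW : MeasurableSet W := hWc.isClosed.measurableSet
  -- X as a function of the noises
  have X_eq : ∀ t ω, X t ω = WMAux.traj A α x₀ t (fun i => w i ω) := by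
    intro t
    induction t with
    | zero => intro ω; rw [hX0]; rfl
    | succ t ih =>
      intro ω
      rw [hXrec, ih]
      show _ = (A (α t)).mulVec (WMAux.traj A α x₀ t
          fun i => w ((Fin.castSucc i : Fin (t+1)) : ℕ) ω) + w ((Fin.last t : Fin (t+1)) : ℕ) ω
      have h1 : (fun i : Fin t => w ((Fin.castSucc i : Fin (t+1)) : ℕ) ω)
          = fun i : Fin t => w i ω := by
        funext i; simp [Fin.coe_castSucc]
      rw [h1, Fin.val_last]
  -- selection of sparse times in {t | α t = p}
  have hex : ∀ n : ℕ, ∃ b, α b = p ∧ n < b := by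
    intro n; obtain ⟨b, hb, hbn⟩ := hp.exists_gt n; exact ⟨b, hb, hbn⟩
  set g : ℕ → ℕ := fun n => (hex (n+1)).choose with hgdef
  have hg1 : ∀ n, α (g n) = p := fun n => (hex (n+1)).choose_spec.1
  have hg2 : ∀ n, n + 1 < g n := fun n => (hex (n+1)).choose_spec.2
  set τ : ℕ → ℕ := fun k => g^[k+1] 0 with hτdef
  have hτsucc : ∀ k, τ (k+1) = g (τ k) := fun k => Function.iterate_succ_apply' g (k+1) 0
  have hτ0 : τ 0 = g 0 := rfl
  have hταp : ∀ k, α (τ k) = p := by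
    intro k
    cases k with
    | zero => rw [hτ0]; exact hg1 0
    | succ k => rw [hτsucc]; exact hg1 _
  have hτgrow : ∀ k, τ k + 2 ≤ τ (k+1) := by
    intro k; rw [hτsucc]; have := hg2 (τ k); omega
  have hτ2 : ∀ k, 2 ≤ τ k := by
    intro k
    induction k with
    | zero => rw [hτ0]; have := hg2 0; omega
    | succ k ih => have := hτgrow k; omega
  have hτmono : Monotone τ := monotone_nat_of_le_succ (fun k => by have := hτgrow k; omega)
  have hτge : ∀ k, k + 2 ≤ τ k := by
    intro k
    induction k with
    | zero => exact hτ2 0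
    | succ k ih => have := hτgrow k; omega
  -- the feasibility events
  set Sev : ℕ → Set Ω := fun k => {ω | B.mulVec (X (τ k) ω) + w (τ k) ω ∈ W} with hSev
  -- the key product bound
  have key : ∀ j n, P (⋂ k ∈ Finset.range n, Sev (j+k)) ≤ (1-δ)^n := by
    intro j n
    induction n with
    | zero => simp
    | succ n ih =>
      set N := τ (j+n) with hN
      have hN2 : 2 ≤ N := hτ2 _
      set N' := N - 1 with hN'
      have hNN' : N = N' + 1 := by omega
      have hN'1 : 1 ≤ N' := by omega
      set past : Ω → (Fin N' → (Fin d → ℝ)) := fun ω i => w i ω with hpast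
      set fresh : Ω → (Fin d → ℝ) × (Fin d → ℝ) := fun ω => (w N' ω, w N ω) with hfresh
      have mpast : Measurable past := measurable_pi_lambda _ fun i => hw i
      have mfresh : Measurable fresh := (hw N').prodMk (hw N)
      have hτlt : ∀ k, k < n → τ (j+k) + 1 ≤ N' := by
        intro k hk
        have h1 : τ (j+k) ≤ τ (j+n-1) := hτmono (by omega)
        have h2 : τ (j+n-1) + 2 ≤ τ (j+n) := by
          have := hτgrow (j+n-1)
          rwa [show j+n-1+1 = j+n by omega] at this
        omega
      set F : ℕ → (Fin N' → (Fin d → ℝ)) → (Fin d → ℝ) := fun m v =>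
        if h : τ m + 1 ≤ N' then
          B.mulVec (WMAux.traj A α x₀ (τ m) (fun i => v ⟨i, by have := i.isLt; omega⟩))
            + v ⟨τ m, by omega⟩
        else 0 with hF
      have mF : ∀ m, Measurable (F m) := by
        intro m
        by_cases h : τ m + 1 ≤ N'
        · simp only [hF, dif_pos h]
          exact ((WMAux.measurable_mulVec B).comp ((WMAux.measurable_traj A α x₀ (τ m)).comp
            (measurable_pi_lambda _ fun i => measurable_pi_apply _))).add (measurable_pi_apply _)
        · simp only [hF, dif_neg h]; exact measurable_const
      set Bset : Set (Fin N' → (Fin d → ℝ)) := ⋂ k ∈ Finset.range n, (F (j+k)) ⁻¹' W with hBset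
      have mBset : MeasurableSet Bset :=
        MeasurableSet.biInter (Finset.range n).countable_toSet (fun k _ => (mF (j+k)) mW)
      have hTpast : (⋂ k ∈ Finset.range n, Sev (j+k)) = past ⁻¹' Bset := by
        ext ω
        simp only [Set.mem_iInter, Set.mem_preimage, hBset, Finset.mem_range]
        refine forall_congr' fun k => ?_
        refine imp_congr_right fun hk => ?_
        have h := hτlt k hk
        have hFeq : F (j+k) (past ω) = B.mulVec (X (τ (j+k)) ω) + w (τ (j+k)) ω := by
          simp only [hF, dif_pos h]
          rw [X_eq]
        rw [hSev]
        show (B.mulVec (X (τ (j+k)) ω) + w (τ (j+k)) ω ∈ W) ↔ F (j+k) (past ω) ∈ W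
        rw [hFeq]
      set cfun : (Fin N' → (Fin d → ℝ)) → (Fin d → ℝ) := fun v =>
        B.mulVec ((A (α N')).mulVec (WMAux.traj A α x₀ N' v)) with hcfun
      have mcfun : Measurable cfun :=
        (WMAux.measurable_mulVec B).comp
          ((WMAux.measurable_mulVec _).comp (WMAux.measurable_traj A α x₀ N'))
      have hSevN : Sev (j+n) = {ω | B.mulVec (fresh ω).1 + (fresh ω).2 + cfun (past ω) ∈ W} := by
        ext ω
        rw [hSev]
        show (B.mulVec (X N ω) + w N ω ∈ W) ↔ _
        have h1 : X N ω = (A (α N')).mulVec (X N' ω) + w N' ω := by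
          rw [hNN']; exact hXrec N' ω
        have h2 : X N' ω = WMAux.traj A α x₀ N' (past ω) := by rw [X_eq]
        rw [h1, Matrix.mulVec_add, h2]
        show (_ ∈ W) ↔ (B.mulVec (w N' ω) + w N ω
          + B.mulVec ((A (α N')).mulVec (WMAux.traj A α x₀ N' (past ω))) ∈ W)
        constructor <;> intro hh <;> [skip; skip] <;>
          · have : B.mulVec ((A (α N')).mulVec (WMAux.traj A α x₀ N' (past ω)))
                + B.mulVec (w N' ω) + w N ω
                = B.mulVec (w N' ω) + w N ω
                + B.mulVec ((A (α N')).mulVec (WMAux.traj A α x₀ N' (past ω))) := by abel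
            first
              | (rw [← this]; exact hh)
              | (rw [← this] at hh; exact hh)
      have hdisj : Disjoint (Finset.range N') ({N', N} : Finset ℕ) := by
        rw [Finset.disjoint_left]
        intro m hm hm2
        rw [Finset.mem_range] at hm
        rw [Finset.mem_insert, Finset.mem_singleton] at hm2
        omega
      have hindep1 : IndepFun past fresh P := by
        have h := hindep.indepFun_finset (Finset.range N') {N', N} hdisj hw
        have hφ1 : Measurable (fun (h : (i : (Finset.range N' : Finset ℕ)) → (Fin d → ℝ)) =>
            (fun i : Fin N' => h ⟨(i:ℕ), by simp [Finset.mem_range]⟩)) :=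
          measurable_pi_lambda _ fun i => measurable_pi_apply _
        have hφ2 : Measurable (fun (h : (i : ({N', N} : Finset ℕ)) → (Fin d → ℝ)) =>
            (h ⟨N', by simp⟩, h ⟨N, by simp⟩)) :=
          (measurable_pi_apply _).prodMk (measurable_pi_apply _)
        exact h.comp hφ1 hφ2
      have hindep2 : IndepFun (w N') (w N) P := hindep.indepFun (by omega)
      have hlawfresh : P.map fresh = μ.prod μ := by
        have h := (indepFun_iff_map_prod_eq_prod_map_map
          (hw N').aemeasurable (hw N).aemeasurable).mp hindep2
        rw [hfresh]
        rw [h, hμlaw N', hμlaw N]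
      have hlawPhi : P.map (fun ω => (past ω, fresh ω)) = (P.map past).prod (μ.prod μ) := by
        have h := (indepFun_iff_map_prod_eq_prod_map_map
          mpast.aemeasurable mfresh.aemeasurable).mp hindep1
        rw [h, hlawfresh]
      set Cset : Set ((Fin N' → (Fin d → ℝ)) × ((Fin d → ℝ) × (Fin d → ℝ))) :=
        {xy | xy.1 ∈ Bset ∧ B.mulVec xy.2.1 + xy.2.2 + cfun xy.1 ∈ W} with hCset
      have mCset : MeasurableSet Cset := by
        refine (mBset.preimage measurable_fst).inter ?_
        have hm : Measurable fun xy : (Fin N' → (Fin d → ℝ)) × ((Fin d → ℝ) × (Fin d → ℝ)) =>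
            B.mulVec xy.2.1 + xy.2.2 + cfun xy.1 :=
          (((WMAux.measurable_mulVec B).comp (measurable_fst.comp measurable_snd)).add
            (measurable_snd.comp measurable_snd)).add (mcfun.comp measurable_fst)
        exact hm mW
      have hinter : (⋂ k ∈ Finset.range (n+1), Sev (j+k))
          = (fun ω => (past ω, fresh ω)) ⁻¹' Cset := by
        rw [Finset.range_add_one, Finset.set_biInter_insert, hSevN, hTpast]
        ext ω
        simp only [Set.mem_inter_iff, Set.mem_setOf_eq, Set.mem_preimage, hCset]
        exact and_comm
      have hPmap : P ((fun ω => (past ω, fresh ω)) ⁻¹' Cset)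
          = ((P.map past).prod (μ.prod μ)) Cset := by
        rw [← hlawPhi, Measure.map_apply (mpast.prodMk mfresh) mCset]
      have hmain : ((P.map past).prod (μ.prod μ)) Cset ≤ (1-δ) * (P.map past) Bset := by
        rw [Measure.prod_apply mCset]
        have hle : ∀ x, (μ.prod μ) (Prod.mk x ⁻¹' Cset)
            ≤ Bset.indicator (fun _ => 1-δ) x := by
          intro x
          by_cases hx : x ∈ Bset
          · rw [Set.indicator_of_mem hx]
            have hpre : Prod.mk x ⁻¹' Cset
                = {yz : (Fin d → ℝ) × (Fin d → ℝ) | B.mulVec yz.1 + yz.2 + cfun x ∈ W} := by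
              ext yz; simp [hCset, hx]
            rw [hpre]; exact hcore (cfun x)
          · have hpre : Prod.mk x ⁻¹' Cset = ∅ := by
              ext yz; simp [hCset, hx]
            simp [hpre, Set.indicator_of_notMem hx]
        calc (∫⁻ x, (μ.prod μ) (Prod.mk x ⁻¹' Cset) ∂(P.map past))
            ≤ ∫⁻ x, Bset.indicator (fun _ => 1-δ) x ∂(P.map past) := lintegral_mono hle
          _ = (1-δ) * (P.map past) Bset := by
              rw [lintegral_indicator mBset, setLIntegral_const]
      have hpastB : (P.map past) Bset = P (⋂ k ∈ Finset.range n, Sev (j+k)) := by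
        rw [Measure.map_apply mpast mBset, ← hTpast]
      calc P (⋂ k ∈ Finset.range (n+1), Sev (j+k))
          = ((P.map past).prod (μ.prod μ)) Cset := by rw [hinter, hPmap]
        _ ≤ (1-δ) * (P.map past) Bset := hmain
        _ ≤ (1-δ) * (1-δ)^n := by
            rw [hpastB]; exact mul_le_mul_right ih _
        _ = (1-δ)^(n+1) := by rw [pow_succ, mul_comm]
  -- vanishing of the infinite intersections
  have hnull : ∀ j, P (⋂ k, Sev (j+k)) = 0 := by
    intro j
    have hle : ∀ n, P (⋂ k, Sev (j+k)) ≤ (1-δ)^n := by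
      intro n
      refine le_trans (measure_mono ?_) (key j n)
      intro ω hω
      simp only [Set.mem_iInter] at hω ⊢
      intro k _
      exact hω k
    have htend : Filter.Tendsto (fun n => (1-δ)^n) Filter.atTop (nhds 0) :=
      ENNReal.tendsto_pow_atTop_nhds_zero_of_lt_one
        (ENNReal.sub_lt_self ENNReal.one_ne_top one_ne_zero hδpos.ne')
    exact le_antisymm (ge_of_tendsto' htend hle) zero_le
  have hae : ∀ᵐ ω ∂P, ∀ j : ℕ, ∃ k, ω ∉ Sev (j+k) := by
    rw [ae_all_iff]
    intro j
    have h0 : P (⋂ k, Sev (j+k)) = 0 := hnull j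
    refine (measure_eq_zero_iff_ae_notMem.mp h0).mono fun ω hω => ?_
    by_contra hc
    push_neg at hc
    exact hω (Set.mem_iInter.mpr fun k => hc k)
  refine hae.mono fun ω hω => ?_
  apply Set.infinite_of_forall_exists_gt
  intro a
  obtain ⟨k, hk⟩ := hω (a+1)
  refine ⟨τ (a+1+k), ⟨?_, hταp _, ?_⟩, ?_⟩
  · have := hτge (a+1+k); omega
  · intro hmem
    apply hk
    have heq : X (τ (a+1+k) + 1) ω - Ahat.mulVec (X (τ (a+1+k)) ω)
        = B.mulVec (X (τ (a+1+k)) ω) + w (τ (a+1+k)) ω := by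
      rw [hXrec, hταp, hBdef, Matrix.sub_mulVec]
      abel
    rw [heq] at hmem
    exact hmem
  · have h1 := hτge (a+1+k)
    have h2 : a + 1 ≤ a + 1 + k := by omega
    omega
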